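/- For any continuation (p1,p2R,p2A,t) with p1>0, the seller's expected revenue conditional on the buyer being naive, R_n = p1(1-F(p1)) + E[p2A(1-F(p2A))] + E[p2R(F(p1)-F(p2R))·1(p2R≤p1)], is at least the seller's expected revenue conditional on the buyer being sophisticated, R_s = p1(1-F(t)) + E[p2A(1-F(p2A))·1(p2A≤t)] + E[p2R(F(t)-F(p2R))]. -/

import Mathlib

open MeasureTheory Set Filter

noncomputable section

namespace RepeatedSales

/-- `F` is the CDF of an atomless distribution fully supported on `[0,1]`:
continuous, strictly increasing on `[0,1]`, with `F 0 = 0` and `F 1 = 1`. -/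
structure NiceCDF (F : ℝ → ℝ) : Prop where
  cont : Continuous F
  mono : StrictMonoOn F (Icc (0:ℝ) 1)
  zero : F 0 = 0
  one : F 1 = 1

/-- The (price-posting) revenue curve `R(p) = p (1 - F p)`. -/
def Rcurve (F : ℝ → ℝ) (p : ℝ) : ℝ := p * (1 - F p)

/-- The CDF truncated at `x` from above: `F_{≤x}(v) = min (F v / F x) 1`. -/
def Fle (F : ℝ → ℝ) (x v : ℝ) : ℝ := min (F v / F x) 1

/-- The CDF truncated at `x` from below: `F_{≥x}(v) = max ((F v - F x)/(1 - F x)) 0`. -/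
def Fge (F : ℝ → ℝ) (x v : ℝ) : ℝ := max ((F v - F x) / (1 - F x)) 0

/-- Revenue curve of the truncated distribution `F_{≤x}`. -/
def Rle (F : ℝ → ℝ) (x p : ℝ) : ℝ := p * (1 - Fle F x p)

/-- Revenue curve of the truncated distribution `F_{≥x}`. -/
def Rge (F : ℝ → ℝ) (x p : ℝ) : ℝ := p * (1 - Fge F x p)

/-- Posterior probability of sophistication after a reject. -/
def muR (F : ℝ → ℝ) (μ p1 t : ℝ) : ℝ := μ * F t / (μ * F t + (1 - μ) * F p1)

/-- Posterior probability of sophistication after an accept. -/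
def muA (F : ℝ → ℝ) (μ p1 t : ℝ) : ℝ :=
  μ * (1 - F t) / (μ * (1 - F t) + (1 - μ) * (1 - F p1))

/-- The seller's posterior CDF over values after a first-round reject. -/
def FrejCDF (F : ℝ → ℝ) (μ p1 t v : ℝ) : ℝ :=
  muR F μ p1 t * Fle F t v + (1 - muR F μ p1 t) * Fle F p1 v

/-- The seller's posterior CDF over values after a first-round accept. -/
def FaccCDF (F : ℝ → ℝ) (μ p1 t v : ℝ) : ℝ :=
  muA F μ p1 t * Fge F t v + (1 - muA F μ p1 t) * Fge F p1 v

/-- The second-round revenue curve conditioned on a reject. -/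
def Rrej (F : ℝ → ℝ) (μ p1 t p : ℝ) : ℝ := p * (1 - FrejCDF F μ p1 t p)

/-- The second-round revenue curve conditioned on an accept. -/
def Racc (F : ℝ → ℝ) (μ p1 t p : ℝ) : ℝ := p * (1 - FaccCDF F μ p1 t p)

/-- The (topological) support of a measure on `ℝ`: points all of whose
neighborhoods have positive measure. -/
def msupp (ν : Measure ℝ) : Set ℝ := {x | ∀ U ∈ nhds x, ν U ≠ 0}

/-- A continuation `(p1, p2R, p2A, t)` at sophistication level `μ`:
`p2R`, `p2A` are (random) prices, i.e. probability measures supported in `[0,1]`,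
every point of the support of `p2R` (resp. `p2A`) maximizes the reject (resp. accept)
revenue curve over `[0,1]`, and the threshold indifference equation holds.
The denominators defining the posteriors are assumed positive. -/
structure Continuation (F : ℝ → ℝ) (μ p1 : ℝ) (p2R p2A : Measure ℝ) (t : ℝ) : Prop where
  denR_pos : 0 < μ * F t + (1 - μ) * F p1
  denA_pos : 0 < μ * (1 - F t) + (1 - μ) * (1 - F p1)
  probR : IsProbabilityMeasure p2R
  probA : IsProbabilityMeasure p2A
  suppR01 : msupp p2R ⊆ Icc 0 1
  suppA01 : msupp p2A ⊆ Icc 0 1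
  optR : ∀ p ∈ msupp p2R, IsMaxOn (Rrej F μ p1 t) (Icc 0 1) p
  optA : ∀ p ∈ msupp p2A, IsMaxOn (Racc F μ p1 t) (Icc 0 1) p
  indiff : t - p1 + (∫ x, max (t - x) 0 ∂p2A) = ∫ x, max (t - x) 0 ∂p2R

/-- A continuation with deterministic accept price `p2A ≥ t`. -/
def SophFocused (p2A : Measure ℝ) (t : ℝ) : Prop :=
  ∃ a : ℝ, p2A = Measure.dirac a ∧ t ≤ a

/-- A continuation with deterministic accept price `p2A < t`. -/
def NaiveFocused (p2A : Measure ℝ) (t : ℝ) : Prop :=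
  ∃ a : ℝ, p2A = Measure.dirac a ∧ a < t

/-- The seller's expected revenue of a continuation at sophistication `μ`. -/
def sellerRev (F : ℝ → ℝ) (μ p1 t : ℝ) (p2R p2A : Measure ℝ) : ℝ :=
  μ * (p1 * (1 - F t) + (∫ a, (if a ≤ t then a * (1 - F a) else 0) ∂p2A)
      + ∫ r, r * (F t - F r) ∂p2R)
  + (1 - μ) * (p1 * (1 - F p1) + (∫ a, a * (1 - F a) ∂p2A)
      + ∫ r, (if r ≤ p1 then r * (F p1 - F r) else 0) ∂p2R)

lemma msupp_compl_null (ν : Measure ℝ) : ν (msupp ν)ᶜ = 0 := by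
  obtain ⟨T, hTc, hTS, hTU⟩ := TopologicalSpace.isOpen_sUnion_countable
    {U : Set ℝ | IsOpen U ∧ ν U = 0} (fun U hU => hU.1)
  have hsub : (msupp ν)ᶜ ⊆ ⋃₀ {U : Set ℝ | IsOpen U ∧ ν U = 0} := by
    intro x hx
    simp only [msupp, mem_compl_iff, mem_setOf_eq, not_forall] at hx
    obtain ⟨U, hU, hU0⟩ := hx
    rw [not_not] at hU0
    obtain ⟨V, hVU, hVopen, hxV⟩ := mem_nhds_iff.mp hU
    exact ⟨V, ⟨hVopen, measure_mono_null hVU hU0⟩, hxV⟩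
  refine measure_mono_null hsub ?_
  rw [← hTU]
  exact (measure_sUnion_null_iff hTc).mpr fun U hU => (hTS hU).2

lemma ae_mem_msupp (ν : Measure ℝ) : ∀ᵐ x ∂ν, x ∈ msupp ν :=
  ae_iff.mpr (msupp_compl_null ν)

lemma ae_mem_Icc (ν : Measure ℝ) (h : msupp ν ⊆ Icc (0:ℝ) 1) :
    ∀ᵐ x ∂ν, x ∈ Icc (0:ℝ) 1 :=
  ae_iff.mpr (measure_mono_null (compl_subset_compl.mpr h) (msupp_compl_null ν))

lemma integrable_of_cont (ν : Measure ℝ) [IsProbabilityMeasure ν]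
    (h : msupp ν ⊆ Icc (0:ℝ) 1) {f : ℝ → ℝ} (hf : Continuous f) :
    Integrable f ν := by
  have h2 : Integrable ((Icc (0:ℝ) 1).indicator f) ν :=
    (integrable_indicator_iff measurableSet_Icc).mpr
      (hf.continuousOn.integrableOn_compact isCompact_Icc)
  refine h2.congr ?_
  filter_upwards [ae_mem_Icc ν h] with x hx
  simp [indicator_of_mem hx]

/-- **Theorem: naive buyers are more lucrative per capita.** For any
continuation `(p1,p2R,p2A,t)` with `p1 > 0`, the seller's expected revenue
conditional on the buyer being naive is at least the expected revenue conditional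
on the buyer being sophisticated. -/
theorem naive_revenue_ge_sophisticated_revenue
    (F : ℝ → ℝ) (hF : NiceCDF F)
    (hcon : StrictConcaveOn ℝ (Icc (0:ℝ) 1) (Rcurve F))
    (μ p1 t : ℝ) (p2R p2A : Measure ℝ)
    (hμ : μ ∈ Icc (0:ℝ) 1) (hp1 : p1 ∈ Ioc (0:ℝ) 1) (ht : t ∈ Icc (0:ℝ) 1)
    (hc : Continuation F μ p1 p2R p2A t) :
    p1 * (1 - F t) + (∫ a, (if a ≤ t then a * (1 - F a) else 0) ∂p2A)
        + (∫ r, r * (F t - F r) ∂p2R)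
      ≤ p1 * (1 - F p1) + (∫ a, a * (1 - F a) ∂p2A)
        + (∫ r, (if r ≤ p1 then r * (F p1 - F r) else 0) ∂p2R) := by
  haveI := hc.probA
  haveI := hc.probR
  have hm : MonotoneOn F (Icc (0:ℝ) 1) := hF.mono.monotoneOn
  obtain ⟨ht0, ht1⟩ := ht
  obtain ⟨hp10, hp11⟩ := hp1
  have h01 : (0:ℝ) ∈ Icc (0:ℝ) 1 := ⟨le_refl 0, zero_le_one⟩
  have h11 : (1:ℝ) ∈ Icc (0:ℝ) 1 := ⟨zero_le_one, le_refl 1⟩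
  have htI : t ∈ Icc (0:ℝ) 1 := ⟨ht0, ht1⟩
  have hpI : p1 ∈ Icc (0:ℝ) 1 := ⟨hp10.le, hp11⟩
  have hFt1 : F t ≤ 1 := hF.one ▸ hm htI h11 ht1
  have hFp11 : F p1 ≤ 1 := hF.one ▸ hm hpI h11 hp11
  have hFt0 : 0 ≤ F t := hF.zero ▸ hm h01 htI ht0
  have hFp10 : 0 ≤ F p1 := hF.zero ▸ hm h01 hpI hp10.le
  -- Step 1 : p1 ≤ t
  have hp1t : p1 ≤ t := by
    by_contra hlt
    push_neg at hlt
    have hFtp1 : F t ≤ F p1 := (hF.mono htI hpI hlt).le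
    have hkey : ∀ a ∈ msupp p2A, t ≤ a := by
      intro a ha
      have haI : a ∈ Icc (0:ℝ) 1 := hc.suppA01 ha
      have hmax : Racc F μ p1 t t ≤ Racc F μ p1 t a := hc.optA a ha htI
      have hRt : Racc F μ p1 t t = t := by
        have h2 : (F t - F p1) / (1 - F p1) ≤ 0 :=
          div_nonpos_of_nonpos_of_nonneg (by linarith) (by linarith)
        simp [Racc, FaccCDF, Fge, max_eq_right h2]
      have hmuA0 : 0 ≤ muA F μ p1 t :=
        div_nonneg (mul_nonneg hμ.1 (by linarith)) hc.denA_pos.le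
      have hmuA1 : muA F μ p1 t ≤ 1 := by
        rw [muA, div_le_one hc.denA_pos]
        nlinarith [hμ.2]
      have hX : 0 ≤ FaccCDF F μ p1 t a := by
        have g1 : (0:ℝ) ≤ Fge F t a := le_max_right _ _
        have g2 : (0:ℝ) ≤ Fge F p1 a := le_max_right _ _
        have e1 := mul_nonneg hmuA0 g1
        have e2 := mul_nonneg (by linarith : (0:ℝ) ≤ 1 - muA F μ p1 t) g2
        simp only [FaccCDF]
        linarith
      have hRa : Racc F μ p1 t a ≤ a := by
        have : Racc F μ p1 t a = a * (1 - FaccCDF F μ p1 t a) := rfl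
        nlinarith [haI.1, mul_nonneg haI.1 hX]
      linarith [hRt ▸ hmax]
    have hMA : (∫ x, max (t - x) 0 ∂p2A) = 0 := by
      have hz : (fun x => max (t - x) 0) =ᵐ[p2A] 0 := by
        filter_upwards [ae_mem_msupp p2A] with x hx
        simpa using max_eq_right (by linarith [hkey x hx] : t - x ≤ 0)
      exact integral_eq_zero_of_ae hz
    have hMR : 0 ≤ ∫ x, max (t - x) 0 ∂p2R :=
      integral_nonneg fun x => le_max_right _ _
    have hind := hc.indiff
    linarith
  have hFc : F p1 ≤ F t := hm hpI htI hp1t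
  -- integrability
  have intA_f : Integrable (fun a => a * (1 - F a)) p2A :=
    integrable_of_cont _ hc.suppA01 (continuous_id.mul (continuous_const.sub hF.cont))
  have intA_max : Integrable (fun x => max (t - x) 0) p2A :=
    integrable_of_cont _ hc.suppA01 ((continuous_const.sub continuous_id).max continuous_const)
  have intR_max : Integrable (fun x => max (t - x) 0) p2R :=
    integrable_of_cont _ hc.suppR01 ((continuous_const.sub continuous_id).max continuous_const)
  have intR_g1 : Integrable (fun r => r * (F t - F r)) p2R :=
    integrable_of_cont _ hc.suppR01 (continuous_id.mul (continuous_const.sub hF.cont))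
  have intR_g2 : Integrable (fun r => r * (F p1 - F r)) p2R :=
    integrable_of_cont _ hc.suppR01 (continuous_id.mul (continuous_const.sub hF.cont))
  have intA_ind : Integrable (fun a => if a ≤ t then a * (1 - F a) else 0) p2A := by
    exact (intA_f.indicator (measurableSet_Iic (a := t))).congr
      (ae_of_all _ fun a => by simp [Set.indicator_apply])
  have intR_ind : Integrable (fun r => if r ≤ p1 then r * (F p1 - F r) else 0) p2R := by
    exact (intR_g2.indicator (measurableSet_Iic (a := p1))).congr
      (ae_of_all _ fun r => by simp [Set.indicator_apply])
  have intA_sub : Integrable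
      (fun a => a * (1 - F a) - (if a ≤ t then a * (1 - F a) else 0)) p2A :=
    intA_f.sub intA_ind
  have intR_sub : Integrable
      (fun r => (if r ≤ p1 then r * (F p1 - F r) else 0) - r * (F t - F r)) p2R :=
    intR_ind.sub intR_g1
  have intA_cm : Integrable (fun a => (F t - F p1) * max (t - a) 0) p2A :=
    intA_max.const_mul _
  have intR_cm : Integrable (fun r => (F t - F p1) * max (t - r) 0) p2R :=
    intR_max.const_mul _
  -- accept side inequality
  have key1 : 0 ≤ (F t - F p1) * (∫ x, max (t - x) 0 ∂p2A)
      + ((∫ a, a * (1 - F a) ∂p2A) - ∫ a, (if a ≤ t then a * (1 - F a) else 0) ∂p2A) := by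
    have hnn : 0 ≤ ∫ a, ((F t - F p1) * max (t - a) 0
        + (a * (1 - F a) - (if a ≤ t then a * (1 - F a) else 0))) ∂p2A := by
      refine integral_nonneg_of_ae ?_
      filter_upwards [ae_mem_Icc p2A hc.suppA01] with a haI
      show (0:ℝ) ≤ _
      have hFa1 : F a ≤ 1 := hF.one ▸ hm haI h11 haI.2
      have h1 : 0 ≤ (F t - F p1) * max (t - a) 0 :=
        mul_nonneg (by linarith) (le_max_right _ _)
      split_ifs with h
      · linarith
      · nlinarith [haI.1]
    rwa [integral_add intA_cm intA_sub,
      integral_const_mul _ _, integral_sub intA_f intA_ind] at hnn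
  -- reject side inequality
  have key2 : 0 ≤ ((F t - F p1) * t - (F t - F p1) * (∫ x, max (t - x) 0 ∂p2R))
      + ((∫ r, (if r ≤ p1 then r * (F p1 - F r) else 0) ∂p2R)
        - ∫ r, r * (F t - F r) ∂p2R) := by
    have hnn : 0 ≤ ∫ r, (((F t - F p1) * t - (F t - F p1) * max (t - r) 0)
        + ((if r ≤ p1 then r * (F p1 - F r) else 0) - r * (F t - F r))) ∂p2R := by
      refine integral_nonneg_of_ae ?_
      filter_upwards [ae_mem_Icc p2R hc.suppR01] with r hrI
      show (0:ℝ) ≤ _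
      rcases le_or_gt r p1 with h1 | h1
      · rw [if_pos h1, max_eq_left (by linarith : (0:ℝ) ≤ t - r)]
        have : (F t - F p1) * t - (F t - F p1) * (t - r)
            + (r * (F p1 - F r) - r * (F t - F r)) = 0 := by ring
        linarith
      · rcases le_or_gt r t with h2 | h2
        · rw [if_neg (not_le.mpr h1), max_eq_left (by linarith : (0:ℝ) ≤ t - r)]
          have hFr : F p1 ≤ F r := hm hpI hrI h1.le
          nlinarith [mul_nonneg hrI.1 (by linarith : (0:ℝ) ≤ F r - F p1)]
        · rw [if_neg (not_le.mpr h1), max_eq_right (by linarith : t - r ≤ 0)]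
          have hFr : F t ≤ F r := hm htI hrI h2.le
          nlinarith [mul_nonneg ht0 (by linarith : (0:ℝ) ≤ F t - F p1),
            mul_nonneg hrI.1 (by linarith : (0:ℝ) ≤ F r - F t)]
    have hciA : Integrable (fun r => (F t - F p1) * t - (F t - F p1) * max (t - r) 0) p2R :=
      (integrable_const _).sub intR_cm
    rwa [integral_add hciA intR_sub,
      integral_sub (integrable_const _) intR_cm,
      integral_const_mul _ _, integral_sub intR_ind intR_g1, integral_const,
      probReal_univ, one_smul, integral_const_mul _ _] at hnn
  have hind := hc.indiff
  have hlin : (F t - F p1) * (∫ x, max (t - x) 0 ∂p2A) + (F t - F p1) * t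
      - (F t - F p1) * (∫ x, max (t - x) 0 ∂p2R) = (F t - F p1) * p1 := by
    linear_combination (F t - F p1) * hind
  nlinarith [key1, key2, hlin]

end RepeatedSales
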